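/- Let a, t be rational numbers with t ≠ 0 and with each of the following nonzero: 2t⁵a³ + t⁵ − 2a², t¹⁰a⁴ − 2t⁵a³ − t⁵ + a², t¹⁰ + a − 2t⁵a² + t¹⁰a³, t⁵a + 1, and t⁵a − 1. Define w = −a(t¹⁰a⁴ − 2t⁵a³ − t⁵ + a²)(t⁵a + 1)(t⁵a − 1) / (t⁴(2t⁵a³ + t⁵ − 2a²)(t¹⁰ + a − 2t⁵a² + t¹⁰a³)), x = −(t¹⁰a⁴ − 2t⁵a³ − t⁵ + a²) / (t⁴(2t⁵a³ + t⁵ − 2a²)), y = −t⁶(2t⁵a³ + t⁵ − 2a²)(t⁵a + 1)(t⁵a − 1) / ((t¹⁰a⁴ − 2t⁵a³ − t⁵ + a²)(t¹⁰ + a − 2t⁵a² + t¹⁰a³)), and z = t(t¹⁰ + a − 2t⁵a² + t¹⁰a³) / ((t⁵a + 1)(t⁵a − 1)). Then wxyz(w + x + y + z) = a. -/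

import Mathlib

theorem stmt_14 (a t : ℚ) (ht : t ≠ 0)
    (h1 : 2 * t ^ 5 * a ^ 3 + t ^ 5 - 2 * a ^ 2 ≠ 0)
    (h2 : t ^ 10 * a ^ 4 - 2 * t ^ 5 * a ^ 3 - t ^ 5 + a ^ 2 ≠ 0)
    (h3 : t ^ 10 + a - 2 * t ^ 5 * a ^ 2 + t ^ 10 * a ^ 3 ≠ 0)
    (h4 : t ^ 5 * a + 1 ≠ 0) (h5 : t ^ 5 * a - 1 ≠ 0)
    (w x y z : ℚ)
    (hw : w = -a * (t ^ 10 * a ^ 4 - 2 * t ^ 5 * a ^ 3 - t ^ 5 + a ^ 2) * (t ^ 5 * a + 1) *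
      (t ^ 5 * a - 1) /
      (t ^ 4 * (2 * t ^ 5 * a ^ 3 + t ^ 5 - 2 * a ^ 2) *
        (t ^ 10 + a - 2 * t ^ 5 * a ^ 2 + t ^ 10 * a ^ 3)))
    (hx : x = -(t ^ 10 * a ^ 4 - 2 * t ^ 5 * a ^ 3 - t ^ 5 + a ^ 2) /
      (t ^ 4 * (2 * t ^ 5 * a ^ 3 + t ^ 5 - 2 * a ^ 2)))
    (hy : y = -t ^ 6 * (2 * t ^ 5 * a ^ 3 + t ^ 5 - 2 * a ^ 2) * (t ^ 5 * a + 1) *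
      (t ^ 5 * a - 1) /
      ((t ^ 10 * a ^ 4 - 2 * t ^ 5 * a ^ 3 - t ^ 5 + a ^ 2) *
        (t ^ 10 + a - 2 * t ^ 5 * a ^ 2 + t ^ 10 * a ^ 3)))
    (hz : z = t * (t ^ 10 + a - 2 * t ^ 5 * a ^ 2 + t ^ 10 * a ^ 3) /
      ((t ^ 5 * a + 1) * (t ^ 5 * a - 1))) :
    w * x * y * z * (w + x + y + z) = a := by
  subst hw hx hy hz
  have h1' : t ^ 5 * (a ^ 3 * 2 + 1) - a ^ 2 * 2 ≠ 0 := by contrapose! h1; linear_combination h1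
  have h2' : t ^ 5 * (a ^ 3 * (a * t ^ 5 - 2) - 1) + a ^ 2 ≠ 0 := by contrapose! h2; linear_combination h2
  have h3' : t ^ 10 + a - a ^ 2 * t ^ 5 * 2 + a ^ 3 * t ^ 10 ≠ 0 := by contrapose! h3; linear_combination h3
  have h4' : a * t ^ 5 + 1 ≠ 0 := by contrapose! h4; linear_combination h4
  have h5' : a * t ^ 5 - 1 ≠ 0 := by contrapose! h5; linear_combination h5
  field_simp [h1', h2', h3', h4', h5']
  ring
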